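/- For the Ising model on a Cayley tree of order k (ρ(σ,ω) = σω, spins in {−1,1}), the family of Boltzmann–Gibbs probability kernels ζ_n(σ_n, h) with boundary fields h is consistent if and only if for every vertex x, h_x = Σ_{y ∈ S(x)} f(h_y, θ), where θ = tanh(Jβ) and f(h,θ) = ½ ln[((1+θ)e^{2h}+(1−θ))/((1−θ)e^{2h}+(1+θ))]. -/

import Mathlib

open scoped BigOperators

variable {V : Type*} [DecidableEq V]

/-- Spheres `Wₙ` around the root of a rooted tree with children map `S`. -/
def treeSphere (root : V) (S : V → Finset V) : ℕ → Finset V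
  | 0 => {root}
  | n + 1 => (treeSphere root S n).biUnion S

/-- Balls `Vₙ = W₀ ∪ ⋯ ∪ Wₙ`. -/
def treeBall (root : V) (S : V → Finset V) (n : ℕ) : Finset V :=
  (Finset.range (n + 1)).biUnion (treeSphere root S)

/-- The Cayley tree of order `k`, rooted at `root`, with children map `S`. -/
structure CayleyTree (V : Type*) [DecidableEq V] (k : ℕ) where
  root : V
  S : V → Finset V
  card_S_root : (S root).card = k + 1
  card_S : ∀ x, x ≠ root → (S x).card = k
  root_not_child : ∀ x, root ∉ S x
  parent_unique : ∀ y, y ≠ root → ∃! x, y ∈ S x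
  reach : ∀ y, ∃ n, y ∈ treeSphere root S n

variable {k : ℕ} (T : CayleyTree V k)

/-- The exponent of the kernel (2.6):
`Jβ Σ_{⟨x,y⟩ ⊆ Vₙ} ρ(σ(x),σ(y)) + Σ_{x ∈ Wₙ} ρ(σ(x), h_x)`;
spins take values in `{-1,1} ≃ ℤˣ`. -/
noncomputable def kernelEnergy (J β : ℝ) (ρ : ℤˣ → ℝ → ℝ) (h : V → ℝ)
    (n : ℕ) (σ : V → ℤˣ) : ℝ :=
  J * β * ∑ x ∈ treeBall T.root T.S n, ∑ y ∈ T.S x ∩ treeBall T.root T.S n,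
      ρ (σ x) ((σ y : ℤ) : ℝ)
    + ∑ x ∈ treeSphere T.root T.S n, ρ (σ x) (h x)

/-- Extend a configuration on the ball `Vₙ` to all of `V` (by `+1` outside;
the energy only depends on coordinates in `Vₙ`). -/
def extendBall (n : ℕ) (τ : treeBall T.root T.S n → ℤˣ) : V → ℤˣ :=
  fun x => if hx : x ∈ treeBall T.root T.S n then τ ⟨x, hx⟩ else 1

/-- The partition function `Z_n^h`. -/
noncomputable def partFn (J β : ℝ) (ρ : ℤˣ → ℝ → ℝ) (h : V → ℝ) (n : ℕ) : ℝ :=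
  ∑ τ : treeBall T.root T.S n → ℤˣ,
    Real.exp (kernelEnergy T J β ρ h n (extendBall T n τ))

/-- The kernel (2.6): `ζₙ(σₙ, h) = (Z_n^h)⁻¹ exp( … )`. -/
noncomputable def kernel (J β : ℝ) (ρ : ℤˣ → ℝ → ℝ) (h : V → ℝ) (n : ℕ)
    (τ : treeBall T.root T.S n → ℤˣ) : ℝ :=
  Real.exp (kernelEnergy T J β ρ h n (extendBall T n τ)) / partFn T J β ρ h n

/-- The configuration on `V_{n+1}` built from `σ` on `Vₙ` and `ω` on the
sphere `W_{n+1}`. -/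
def mergeConf (n : ℕ) (σ : treeBall T.root T.S n → ℤˣ)
    (ω : treeSphere T.root T.S (n + 1) → ℤˣ) :
    treeBall T.root T.S (n + 1) → ℤˣ :=
  fun x => if hx : (x : V) ∈ treeBall T.root T.S n then σ ⟨x, hx⟩
    else if hx' : (x : V) ∈ treeSphere T.root T.S (n + 1) then ω ⟨x, hx'⟩
    else 1

/-- The Cayley-tree Ising recursion function
`f(h,θ) = ½ ln[((1+θ)e^{2h}+(1−θ))/((1−θ)e^{2h}+(1+θ))]`. -/
noncomputable def isingF (h θ : ℝ) : ℝ :=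
  (1 / 2) * Real.log (((1 + θ) * Real.exp (2 * h) + (1 - θ)) /
    ((1 - θ) * Real.exp (2 * h) + (1 + θ)))

/-! ### Auxiliary lemmas -/

section AuxStruct

lemma mem_sphere_succ {y r : V} {S : V → Finset V} {n : ℕ} :
    y ∈ treeSphere r S (n + 1) ↔ ∃ x ∈ treeSphere r S n, y ∈ S x := Finset.mem_biUnion

lemma mem_ball {y r : V} {S : V → Finset V} {n : ℕ} :
    y ∈ treeBall r S n ↔ ∃ m ≤ n, y ∈ treeSphere r S m := by
  simp [treeBall, Nat.lt_succ_iff]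

lemma aux_child_ne_root {x y : V} (hy : y ∈ T.S x) : y ≠ T.root := by
  rintro rfl; exact T.root_not_child x hy

lemma aux_parent_eq {x x' y : V} (hy : y ∈ T.S x) (hy' : y ∈ T.S x') : x = x' := by
  obtain ⟨z, hz, hu⟩ := T.parent_unique y (aux_child_ne_root T hy)
  rw [hu x hy, hu x' hy']

lemma aux_sphere_inj : ∀ (m : ℕ) {y : V}, y ∈ treeSphere T.root T.S m →
    ∀ {n : ℕ}, y ∈ treeSphere T.root T.S n → m = n := by
  intro m
  induction m with
  | zero =>
    intro y hy n hn
    cases n with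
    | zero => rfl
    | succ n =>
      obtain ⟨x, _, hx⟩ := mem_sphere_succ.1 hn
      rw [treeSphere, Finset.mem_singleton] at hy
      exact absurd (hy ▸ hx) (T.root_not_child x)
  | succ m ih =>
    intro y hy n hn
    obtain ⟨x, hxm, hx⟩ := mem_sphere_succ.1 hy
    cases n with
    | zero =>
      rw [treeSphere, Finset.mem_singleton] at hn
      exact absurd (hn ▸ hx) (T.root_not_child x)
    | succ n =>
      obtain ⟨x', hxn, hx'⟩ := mem_sphere_succ.1 hn
      obtain rfl := aux_parent_eq T hx hx'
      exact congrArg Nat.succ (ih hxm hxn)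

lemma sphere_subset_ball {n : ℕ} : treeSphere T.root T.S n ⊆ treeBall T.root T.S n :=
  fun _ hy => mem_ball.2 ⟨n, le_refl _, hy⟩

lemma ball_subset_ball_succ {n : ℕ} : treeBall T.root T.S n ⊆ treeBall T.root T.S (n + 1) := by
  intro y hy
  obtain ⟨m, hm, hms⟩ := mem_ball.1 hy
  exact mem_ball.2 ⟨m, hm.trans (Nat.le_succ n), hms⟩

lemma ball_succ (n : ℕ) :
    treeBall T.root T.S (n + 1) = treeBall T.root T.S n ∪ treeSphere T.root T.S (n + 1) := by
  rw [treeBall, Finset.range_add_one, Finset.biUnion_insert, Finset.union_comm, treeBall]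

lemma disj_ball_sphere {n : ℕ} :
    Disjoint (treeBall T.root T.S n) (treeSphere T.root T.S (n + 1)) := by
  rw [Finset.disjoint_left]
  intro y hy hy'
  obtain ⟨m, hm, hms⟩ := mem_ball.1 hy
  have := aux_sphere_inj T m hms hy'
  omega

lemma children_subset_sphere {x : V} {m : ℕ} (hx : x ∈ treeSphere T.root T.S m) :
    T.S x ⊆ treeSphere T.root T.S (m + 1) :=
  fun y hy => mem_sphere_succ.2 ⟨x, hx, hy⟩

lemma children_inter_ball_empty {x : V} {n : ℕ} (hx : x ∈ treeSphere T.root T.S (n + 1)) :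
    T.S x ∩ treeBall T.root T.S (n + 1) = ∅ := by
  rw [Finset.eq_empty_iff_forall_notMem]
  intro y hy
  rw [Finset.mem_inter] at hy
  obtain ⟨m, hm, hms⟩ := mem_ball.1 hy.2
  have := aux_sphere_inj T (n + 2) (children_subset_sphere T hx hy.1) hms
  omega

lemma children_inter_sphere_empty {x : V} {n : ℕ} (hx : x ∈ treeBall T.root T.S n)
    (hx' : x ∉ treeSphere T.root T.S n) :
    T.S x ∩ treeSphere T.root T.S (n + 1) = ∅ := by
  rw [Finset.eq_empty_iff_forall_notMem]
  intro y hy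
  rw [Finset.mem_inter] at hy
  obtain ⟨m, hm, hms⟩ := mem_ball.1 hx
  have h2 := aux_sphere_inj T (m + 1) (children_subset_sphere T hms hy.1) hy.2
  obtain rfl : m = n := by omega
  exact hx' hms

lemma children_pairwiseDisjoint (s : Finset V) : (↑s : Set V).PairwiseDisjoint T.S :=
  fun _ _ _ _ hne => Finset.disjoint_left.2 fun _ hy hy' => hne (aux_parent_eq T hy hy')

lemma edge_sum_split (G : V → V → ℝ) (n : ℕ) :
    ∑ x ∈ treeBall T.root T.S (n + 1), ∑ y ∈ T.S x ∩ treeBall T.root T.S (n + 1), G x y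
      = (∑ x ∈ treeBall T.root T.S n, ∑ y ∈ T.S x ∩ treeBall T.root T.S n, G x y)
        + ∑ x ∈ treeSphere T.root T.S n, ∑ y ∈ T.S x, G x y := by
  rw [ball_succ T n, Finset.sum_union (disj_ball_sphere T)]
  have hzero : ∑ x ∈ treeSphere T.root T.S (n + 1),
      ∑ y ∈ T.S x ∩ (treeBall T.root T.S n ∪ treeSphere T.root T.S (n + 1)), G x y = 0 :=
    Finset.sum_eq_zero fun x hx => by
      rw [← ball_succ T n, children_inter_ball_empty T hx, Finset.sum_empty]
  rw [hzero, add_zero]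
  have hsplit : ∀ x ∈ treeBall T.root T.S n,
      ∑ y ∈ T.S x ∩ (treeBall T.root T.S n ∪ treeSphere T.root T.S (n + 1)), G x y
        = (∑ y ∈ T.S x ∩ treeBall T.root T.S n, G x y)
          + ∑ y ∈ T.S x ∩ treeSphere T.root T.S (n + 1), G x y := fun x _ => by
    rw [Finset.inter_union_distrib_left, Finset.sum_union
      ((disj_ball_sphere T).mono Finset.inter_subset_right Finset.inter_subset_right)]
  rw [Finset.sum_congr rfl hsplit, Finset.sum_add_distrib]
  congr 1
  rw [← Finset.sum_subset (sphere_subset_ball T) (fun x hx hx' => by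
    rw [children_inter_sphere_empty T hx hx', Finset.sum_empty])]
  exact Finset.sum_congr rfl fun x hx => by
    rw [Finset.inter_eq_left.2 (children_subset_sphere T hx)]

lemma sphere_sum_split (g : V → ℝ) (n : ℕ) :
    ∑ x ∈ treeSphere T.root T.S (n + 1), g x
      = ∑ x ∈ treeSphere T.root T.S n, ∑ y ∈ T.S x, g y := by
  rw [show treeSphere T.root T.S (n + 1) = (treeSphere T.root T.S n).biUnion T.S from rfl]
  exact Finset.sum_biUnion (children_pairwiseDisjoint T _)

lemma sphere_prod_split (g : V → ℝ) (n : ℕ) :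
    ∏ x ∈ treeSphere T.root T.S (n + 1), g x
      = ∏ x ∈ treeSphere T.root T.S n, ∏ y ∈ T.S x, g y := by
  rw [show treeSphere T.root T.S (n + 1) = (treeSphere T.root T.S n).biUnion T.S from rfl]
  exact Finset.prod_biUnion (children_pairwiseDisjoint T _)

end AuxStruct

section AuxAnalytic

noncomputable def aAux (c t : ℝ) : ℝ :=
  (Real.exp (c + t) + Real.exp (-(c + t))) * Real.exp (-isingF t (Real.tanh c))

lemma one_add_tanh (c : ℝ) : 1 + Real.tanh c = Real.exp c / Real.cosh c := by
  rw [Real.tanh_eq_sinh_div_cosh, ← Real.cosh_add_sinh c]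
  field_simp [(Real.cosh_pos c).ne']

lemma one_sub_tanh (c : ℝ) : 1 - Real.tanh c = Real.exp (-c) / Real.cosh c := by
  rw [Real.tanh_eq_sinh_div_cosh, ← Real.cosh_sub_sinh c]
  field_simp [(Real.cosh_pos c).ne']

lemma exp_two_isingF (c t : ℝ) :
    Real.exp (2 * isingF t (Real.tanh c)) =
      (Real.exp (c + t) + Real.exp (-(c + t))) / (Real.exp (c - t) + Real.exp (-(c - t))) := by
  have hc := Real.cosh_pos c
  have hE := Real.exp_pos c
  have hF := Real.exp_pos t
  have hnum : (1 + Real.tanh c) * Real.exp (2 * t) + (1 - Real.tanh c)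
      = Real.exp t * (Real.exp (c + t) + Real.exp (-(c + t))) / Real.cosh c := by
    rw [one_add_tanh, one_sub_tanh]
    simp only [neg_add, neg_sub, two_mul, Real.exp_add, Real.exp_sub, Real.exp_neg]
    field_simp
  have hden : (1 - Real.tanh c) * Real.exp (2 * t) + (1 + Real.tanh c)
      = Real.exp t * (Real.exp (c - t) + Real.exp (-(c - t))) / Real.cosh c := by
    rw [one_add_tanh, one_sub_tanh]
    simp only [neg_add, neg_sub, two_mul, Real.exp_add, Real.exp_sub, Real.exp_neg]
    field_simp
    ring
  have hpos : 0 < ((1 + Real.tanh c) * Real.exp (2 * t) + (1 - Real.tanh c)) /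
      ((1 - Real.tanh c) * Real.exp (2 * t) + (1 + Real.tanh c)) := by
    rw [hnum, hden]; positivity
  rw [isingF, show 2 * ((1 / 2 : ℝ) * Real.log (((1 + Real.tanh c) * Real.exp (2 * t) + (1 - Real.tanh c)) /
      ((1 - Real.tanh c) * Real.exp (2 * t) + (1 + Real.tanh c)))) = Real.log (((1 + Real.tanh c) * Real.exp (2 * t) + (1 - Real.tanh c)) /
      ((1 - Real.tanh c) * Real.exp (2 * t) + (1 + Real.tanh c))) by ring]
  rw [Real.exp_log hpos, hnum, hden]
  have h1 : (0:ℝ) < Real.exp (c + t) + Real.exp (-(c + t)) := by positivity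
  have h2 : (0:ℝ) < Real.exp (c - t) + Real.exp (-(c - t)) := by positivity
  field_simp

lemma aAux_pos (c t : ℝ) : 0 < aAux c t := by rw [aAux]; positivity

lemma sum_units_exp (c t : ℝ) (s : ℤˣ) :
    (∑ u : ℤˣ, Real.exp ((c * ((s : ℤ) : ℝ) + t) * ((u : ℤ) : ℝ)))
      = aAux c t * Real.exp (((s : ℤ) : ℝ) * isingF t (Real.tanh c)) := by
  have huniv : (Finset.univ : Finset ℤˣ) = {1, -1} := by
    ext u
    simp only [Finset.mem_univ, Finset.mem_insert, Finset.mem_singleton, true_iff]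
    exact Int.units_eq_one_or u
  have hne : (1 : ℤˣ) ∉ ({-1} : Finset ℤˣ) := by decide
  rw [huniv, Finset.sum_insert hne, Finset.sum_singleton]
  have h1 : (0:ℝ) < Real.exp (c + t) + Real.exp (-(c + t)) := by positivity
  set f := isingF t (Real.tanh c) with hf
  have h2f : Real.exp (2 * f) = (Real.exp (c + t) + Real.exp (-(c + t))) /
      (Real.exp (c - t) + Real.exp (-(c - t))) := exp_two_isingF c t
  rcases Int.units_eq_one_or s with rfl | rfl
  · simp only [Units.val_one, Units.val_neg, Int.cast_one, Int.cast_neg, mul_one, mul_neg_one,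
      one_mul]
    rw [aAux, mul_assoc, ← Real.exp_add, ← hf, neg_add_cancel, Real.exp_zero, mul_one]
  · simp only [Units.val_one, Units.val_neg, Int.cast_one, Int.cast_neg, mul_one, mul_neg_one,
      one_mul, neg_one_mul]
    rw [show -c + t = -(c - t) by ring, neg_neg, aAux, mul_assoc, ← Real.exp_add, ← hf,
      show -f + -f = -(2 * f) by ring, Real.exp_neg (2 * f), h2f, inv_div, mul_comm,
      div_mul_cancel₀ _ h1.ne', add_comm]

end AuxAnalytic

section AuxKernel

/-- One step of the Ising recursion applied to a field. -/
noncomputable def hIter (T : CayleyTree V k) (J β : ℝ) (h : V → ℝ) : V → ℝ :=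
  fun x => ∑ y ∈ T.S x, isingF (h y) (Real.tanh (J * β))

/-- The normalizing constant relating `Z_{n+1}` and `Z_n`. -/
noncomputable def bigC (T : CayleyTree V k) (J β : ℝ) (h : V → ℝ) (n : ℕ) : ℝ :=
  ∏ x ∈ treeSphere T.root T.S n, ∏ y ∈ T.S x, aAux (J * β) (h y)

lemma bigC_pos (J β : ℝ) (h : V → ℝ) (n : ℕ) : 0 < bigC T J β h n :=
  Finset.prod_pos fun _ _ => Finset.prod_pos fun _ _ => aAux_pos _ _

open Classical in
/-- Value of `g` at the parent of `y`. -/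
noncomputable def parCoef (T : CayleyTree V k) (g : V → ℝ) (y : V) : ℝ :=
  if hy : ∃ x, y ∈ T.S x then g hy.choose else 0

lemma parCoef_eq (g : V → ℝ) {x y : V} (hy : y ∈ T.S x) : parCoef T g y = g x := by
  have hex : ∃ x, y ∈ T.S x := ⟨x, hy⟩
  rw [parCoef, dif_pos hex, aux_parent_eq T hex.choose_spec hy]

lemma partFn_pos (J β : ℝ) (ρ : ℤˣ → ℝ → ℝ) (h : V → ℝ) (n : ℕ) :
    0 < partFn T J β ρ h n :=
  Finset.sum_pos (fun _ _ => Real.exp_pos _) ⟨fun _ => 1, Finset.mem_univ _⟩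

/-- Splitting a configuration on `V_{n+1}` into its parts on `Vₙ` and `W_{n+1}`. -/
def mergeEquiv (n : ℕ) :
    ((treeBall T.root T.S n → ℤˣ) × (treeSphere T.root T.S (n + 1) → ℤˣ)) ≃
      (treeBall T.root T.S (n + 1) → ℤˣ) where
  toFun p := mergeConf T n p.1 p.2
  invFun τ := (fun z => τ ⟨z.1, ball_subset_ball_succ T z.2⟩,
    fun z => τ ⟨z.1, sphere_subset_ball T z.2⟩)
  left_inv p := by
    obtain ⟨σ, ω⟩ := p
    refine Prod.ext (funext fun z => ?_) (funext fun z => ?_)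
    · simp [mergeConf, z.2]
    · have hzn : (z : V) ∉ treeBall T.root T.S n :=
        Finset.disjoint_right.1 (disj_ball_sphere T) z.2
      simp [mergeConf, hzn, z.2]
  right_inv τ := by
    funext z
    by_cases hz : (z : V) ∈ treeBall T.root T.S n
    · simp only [mergeConf]
      rw [dif_pos hz]
      all_goals exact congrArg τ (Subtype.ext rfl)
    · have hz' : (z : V) ∈ treeSphere T.root T.S (n + 1) := by
        obtain ⟨m, hm, hms⟩ := mem_ball.1 z.2
        rcases Nat.lt_or_ge m (n + 1) with hlt | hge
        · exact absurd (mem_ball.2 ⟨m, by omega, hms⟩) hz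
        · obtain rfl : m = n + 1 := le_antisymm hm hge
          exact hms
      simp only [mergeConf]
      rw [dif_neg hz, dif_pos hz']
      all_goals exact congrArg τ (Subtype.ext rfl)

end AuxKernel

section MainLemmas

lemma sum_merge_exp (J β : ℝ) (h : V → ℝ) (n : ℕ) (σ : treeBall T.root T.S n → ℤˣ) :
    (∑ ω : treeSphere T.root T.S (n + 1) → ℤˣ,
        Real.exp (kernelEnergy T J β (fun u r => ((u : ℤ) : ℝ) * r) h (n + 1)
          (extendBall T (n + 1) (mergeConf T n σ ω))))
      = bigC T J β h n *
        Real.exp (kernelEnergy T J β (fun u r => ((u : ℤ) : ℝ) * r) (hIter T J β h) n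
          (extendBall T n σ)) := by
  classical
  have hext1 : ∀ (ω : treeSphere T.root T.S (n + 1) → ℤˣ) (z : V),
      z ∈ treeBall T.root T.S n →
      extendBall T (n + 1) (mergeConf T n σ ω) z = extendBall T n σ z := by
    intro ω z hz
    have hz1 : z ∈ treeBall T.root T.S (n + 1) := ball_subset_ball_succ T hz
    simp [extendBall, mergeConf, hz, hz1]
  have hext2 : ∀ (ω : treeSphere T.root T.S (n + 1) → ℤˣ) (z : V)
      (hz : z ∈ treeSphere T.root T.S (n + 1)),
      extendBall T (n + 1) (mergeConf T n σ ω) z = ω ⟨z, hz⟩ := by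
    intro ω z hz
    have hz1 : z ∈ treeBall T.root T.S (n + 1) := sphere_subset_ball T hz
    have hzn : z ∉ treeBall T.root T.S n := Finset.disjoint_right.1 (disj_ball_sphere T) hz
    simp [extendBall, mergeConf, hz, hz1, hzn]
  set cf : V → ℝ := fun y =>
    J * β * parCoef T (fun z => ((extendBall T n σ z : ℤ) : ℝ)) y + h y with hcf
  have hcfx : ∀ x, ∀ y ∈ T.S x,
      cf y = J * β * ((extendBall T n σ x : ℤ) : ℝ) + h y := by
    intro x y hy
    rw [hcf]
    simp only
    rw [parCoef_eq T _ hy]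
  have key : ∀ ω : treeSphere T.root T.S (n + 1) → ℤˣ,
      kernelEnergy T J β (fun u r => ((u : ℤ) : ℝ) * r) h (n + 1)
        (extendBall T (n + 1) (mergeConf T n σ ω))
      = J * β * (∑ x ∈ treeBall T.root T.S n, ∑ y ∈ T.S x ∩ treeBall T.root T.S n,
            ((extendBall T n σ x : ℤ) : ℝ) * ((extendBall T n σ y : ℤ) : ℝ))
        + ∑ x ∈ treeSphere T.root T.S n, ∑ y ∈ T.S x,
            cf y * ((extendBall T (n + 1) (mergeConf T n σ ω) y : ℤ) : ℝ) := by
    intro ω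
    simp only [kernelEnergy]
    rw [edge_sum_split T (fun a b => ((extendBall T (n + 1) (mergeConf T n σ ω) a : ℤ) : ℝ) *
      ((extendBall T (n + 1) (mergeConf T n σ ω) b : ℤ) : ℝ)) n]
    rw [sphere_sum_split T (fun z => ((extendBall T (n + 1) (mergeConf T n σ ω) z : ℤ) : ℝ) * h z) n]
    have hA : (∑ x ∈ treeBall T.root T.S n, ∑ y ∈ T.S x ∩ treeBall T.root T.S n,
          ((extendBall T (n + 1) (mergeConf T n σ ω) x : ℤ) : ℝ) *
            ((extendBall T (n + 1) (mergeConf T n σ ω) y : ℤ) : ℝ))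
        = ∑ x ∈ treeBall T.root T.S n, ∑ y ∈ T.S x ∩ treeBall T.root T.S n,
            ((extendBall T n σ x : ℤ) : ℝ) * ((extendBall T n σ y : ℤ) : ℝ) :=
      Finset.sum_congr rfl fun x hx => Finset.sum_congr rfl fun y hy => by
        rw [hext1 ω x hx, hext1 ω y (Finset.mem_inter.1 hy).2]
    have hcross : (∑ x ∈ treeSphere T.root T.S n, ∑ y ∈ T.S x,
          ((extendBall T (n + 1) (mergeConf T n σ ω) x : ℤ) : ℝ) *
            ((extendBall T (n + 1) (mergeConf T n σ ω) y : ℤ) : ℝ))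
        = ∑ x ∈ treeSphere T.root T.S n, ∑ y ∈ T.S x,
            ((extendBall T n σ x : ℤ) : ℝ) *
              ((extendBall T (n + 1) (mergeConf T n σ ω) y : ℤ) : ℝ) :=
      Finset.sum_congr rfl fun x hx => Finset.sum_congr rfl fun y _ => by
        rw [hext1 ω x (sphere_subset_ball T hx)]
    rw [hA, hcross, mul_add, add_assoc]
    congr 1
    rw [Finset.mul_sum, ← Finset.sum_add_distrib]
    refine Finset.sum_congr rfl fun x hx => ?_
    rw [Finset.mul_sum, ← Finset.sum_add_distrib]
    refine Finset.sum_congr rfl fun y hy => ?_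
    rw [hcfx x y hy]
    ring
  have hsub : ∀ ω : treeSphere T.root T.S (n + 1) → ℤˣ,
      (∏ x ∈ treeSphere T.root T.S n, ∏ y ∈ T.S x,
          Real.exp (cf y * ((extendBall T (n + 1) (mergeConf T n σ ω) y : ℤ) : ℝ)))
        = ∏ y : treeSphere T.root T.S (n + 1), Real.exp (cf ↑y * ((ω y : ℤ) : ℝ)) := by
    intro ω
    rw [← sphere_prod_split T
      (fun z => Real.exp (cf z * ((extendBall T (n + 1) (mergeConf T n σ ω) z : ℤ) : ℝ))) n]
    rw [Finset.univ_eq_attach]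
    rw [← Finset.prod_attach (treeSphere T.root T.S (n + 1))
      (fun z => Real.exp (cf z * ((extendBall T (n + 1) (mergeConf T n σ ω) z : ℤ) : ℝ)))]
    exact Finset.prod_congr rfl fun y _ => by rw [hext2 ω ↑y y.2, Subtype.coe_eta]
  have hfub : (∑ ω : treeSphere T.root T.S (n + 1) → ℤˣ,
        ∏ y : treeSphere T.root T.S (n + 1), Real.exp (cf ↑y * ((ω y : ℤ) : ℝ)))
      = ∏ y : treeSphere T.root T.S (n + 1), ∑ u : ℤˣ, Real.exp (cf ↑y * ((u : ℤ) : ℝ)) := by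
    rw [Finset.prod_univ_sum, Fintype.piFinset_univ]
  have main : ∀ a : ℝ,
      (∑ ω : treeSphere T.root T.S (n + 1) → ℤˣ,
          Real.exp (J * β * a + ∑ x ∈ treeSphere T.root T.S n, ∑ y ∈ T.S x,
            cf y * ((extendBall T (n + 1) (mergeConf T n σ ω) y : ℤ) : ℝ)))
        = Real.exp (J * β * a) * (bigC T J β h n *
            ∏ x ∈ treeSphere T.root T.S n,
              Real.exp (((extendBall T n σ x : ℤ) : ℝ) * hIter T J β h x)) := by
    intro a
    calc (∑ ω : treeSphere T.root T.S (n + 1) → ℤˣ,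
          Real.exp (J * β * a + ∑ x ∈ treeSphere T.root T.S n, ∑ y ∈ T.S x,
            cf y * ((extendBall T (n + 1) (mergeConf T n σ ω) y : ℤ) : ℝ)))
        = ∑ ω : treeSphere T.root T.S (n + 1) → ℤˣ,
            Real.exp (J * β * a) * ∏ x ∈ treeSphere T.root T.S n, ∏ y ∈ T.S x,
              Real.exp (cf y * ((extendBall T (n + 1) (mergeConf T n σ ω) y : ℤ) : ℝ)) :=
          Finset.sum_congr rfl fun ω _ => by
            rw [Real.exp_add, Real.exp_sum]
            congr 1
            exact Finset.prod_congr rfl fun x _ => Real.exp_sum _ _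
      _ = Real.exp (J * β * a) * ∑ ω : treeSphere T.root T.S (n + 1) → ℤˣ,
            ∏ x ∈ treeSphere T.root T.S n, ∏ y ∈ T.S x,
              Real.exp (cf y * ((extendBall T (n + 1) (mergeConf T n σ ω) y : ℤ) : ℝ)) :=
          (Finset.mul_sum _ _ _).symm
      _ = Real.exp (J * β * a) * ∑ ω : treeSphere T.root T.S (n + 1) → ℤˣ,
            ∏ y : treeSphere T.root T.S (n + 1), Real.exp (cf ↑y * ((ω y : ℤ) : ℝ)) :=
          congrArg (fun t => Real.exp (J * β * a) * t)
            (Finset.sum_congr rfl fun ω _ => hsub ω)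
      _ = Real.exp (J * β * a) *
            ∏ y : treeSphere T.root T.S (n + 1), ∑ u : ℤˣ, Real.exp (cf ↑y * ((u : ℤ) : ℝ)) :=
          congrArg (fun t => Real.exp (J * β * a) * t) hfub
      _ = Real.exp (J * β * a) *
            ∏ y ∈ treeSphere T.root T.S (n + 1), ∑ u : ℤˣ, Real.exp (cf y * ((u : ℤ) : ℝ)) := by
          rw [Finset.univ_eq_attach, Finset.prod_attach (treeSphere T.root T.S (n + 1))
            (fun z => ∑ u : ℤˣ, Real.exp (cf z * ((u : ℤ) : ℝ)))]
      _ = Real.exp (J * β * a) * ∏ x ∈ treeSphere T.root T.S n, ∏ y ∈ T.S x,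
            ∑ u : ℤˣ, Real.exp (cf y * ((u : ℤ) : ℝ)) := by
          rw [sphere_prod_split T (fun z => ∑ u : ℤˣ, Real.exp (cf z * ((u : ℤ) : ℝ))) n]
      _ = Real.exp (J * β * a) * ∏ x ∈ treeSphere T.root T.S n, ∏ y ∈ T.S x,
            (aAux (J * β) (h y) *
              Real.exp (((extendBall T n σ x : ℤ) : ℝ) * isingF (h y) (Real.tanh (J * β)))) :=
          congrArg (fun t => Real.exp (J * β * a) * t)
            (Finset.prod_congr rfl fun x _ => Finset.prod_congr rfl fun y hy => by
              rw [hcfx x y hy]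
              exact sum_units_exp (J * β) (h y) (extendBall T n σ x))
      _ = Real.exp (J * β * a) * (bigC T J β h n *
            ∏ x ∈ treeSphere T.root T.S n, ∏ y ∈ T.S x,
              Real.exp (((extendBall T n σ x : ℤ) : ℝ) * isingF (h y) (Real.tanh (J * β)))) := by
          simp only [Finset.prod_mul_distrib]
          rw [bigC]
      _ = Real.exp (J * β * a) * (bigC T J β h n *
            ∏ x ∈ treeSphere T.root T.S n,
              Real.exp (((extendBall T n σ x : ℤ) : ℝ) * hIter T J β h x)) :=
          congrArg (fun t => Real.exp (J * β * a) * (bigC T J β h n * t))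
            (Finset.prod_congr rfl fun x _ => by
              simp only [hIter]
              rw [Finset.mul_sum, Real.exp_sum])
  calc (∑ ω : treeSphere T.root T.S (n + 1) → ℤˣ,
        Real.exp (kernelEnergy T J β (fun u r => ((u : ℤ) : ℝ) * r) h (n + 1)
          (extendBall T (n + 1) (mergeConf T n σ ω))))
      = ∑ ω : treeSphere T.root T.S (n + 1) → ℤˣ,
          Real.exp (J * β * (∑ x ∈ treeBall T.root T.S n, ∑ y ∈ T.S x ∩ treeBall T.root T.S n,
              ((extendBall T n σ x : ℤ) : ℝ) * ((extendBall T n σ y : ℤ) : ℝ))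
            + ∑ x ∈ treeSphere T.root T.S n, ∑ y ∈ T.S x,
                cf y * ((extendBall T (n + 1) (mergeConf T n σ ω) y : ℤ) : ℝ)) :=
        Finset.sum_congr rfl fun ω _ => congrArg Real.exp (key ω)
    _ = Real.exp (J * β * (∑ x ∈ treeBall T.root T.S n, ∑ y ∈ T.S x ∩ treeBall T.root T.S n,
            ((extendBall T n σ x : ℤ) : ℝ) * ((extendBall T n σ y : ℤ) : ℝ))) *
          (bigC T J β h n * ∏ x ∈ treeSphere T.root T.S n,
            Real.exp (((extendBall T n σ x : ℤ) : ℝ) * hIter T J β h x)) :=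
        main _
    _ = bigC T J β h n *
          Real.exp (kernelEnergy T J β (fun u r => ((u : ℤ) : ℝ) * r) (hIter T J β h) n
            (extendBall T n σ)) := by
        simp only [kernelEnergy]
        rw [← Real.exp_sum, Real.exp_add]
        ring

lemma partFn_succ (J β : ℝ) (h : V → ℝ) (n : ℕ) :
    partFn T J β (fun u r => ((u : ℤ) : ℝ) * r) h (n + 1)
      = bigC T J β h n * partFn T J β (fun u r => ((u : ℤ) : ℝ) * r) (hIter T J β h) n := by
  rw [partFn, ← Equiv.sum_comp (mergeEquiv T n) (fun τ =>
      Real.exp (kernelEnergy T J β (fun u r => ((u : ℤ) : ℝ) * r) h (n + 1)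
        (extendBall T (n + 1) τ))),
    Fintype.sum_prod_type]
  simp only [mergeEquiv, Equiv.coe_fn_mk]
  rw [partFn, Finset.mul_sum]
  exact Finset.sum_congr rfl fun σ' _ => sum_merge_exp T J β h n σ'

lemma lhs_eq (J β : ℝ) (h : V → ℝ) (n : ℕ) (σ : treeBall T.root T.S n → ℤˣ) :
    (∑ ω : treeSphere T.root T.S (n + 1) → ℤˣ,
        kernel T J β (fun u r => ((u : ℤ) : ℝ) * r) h (n + 1) (mergeConf T n σ ω))
      = bigC T J β h n *
          Real.exp (kernelEnergy T J β (fun u r => ((u : ℤ) : ℝ) * r) (hIter T J β h) n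
            (extendBall T n σ)) / partFn T J β (fun u r => ((u : ℤ) : ℝ) * r) h (n + 1) := by
  simp only [kernel]
  rw [← Finset.sum_div, sum_merge_exp]

end MainLemmas

/-- For the Ising model (`ρ(σ,ω) = σω`) on the Cayley tree of order `k`, the
Boltzmann–Gibbs kernels with boundary fields `h` are consistent iff
`h_x = Σ_{y ∈ S(x)} f(h_y, θ)` for every vertex `x`, where `θ = tanh(Jβ)`. -/
theorem ising_kernels_consistent_iff (J β : ℝ) (h : V → ℝ) :
    (∀ (n : ℕ) (σ : treeBall T.root T.S n → ℤˣ),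
        (∑ ω : treeSphere T.root T.S (n + 1) → ℤˣ,
            kernel T J β (fun u r => ((u : ℤ) : ℝ) * r) h (n + 1)
              (mergeConf T n σ ω)) =
          kernel T J β (fun u r => ((u : ℤ) : ℝ) * r) h n σ) ↔
      ∀ x : V, h x = ∑ y ∈ T.S x, isingF (h y) (Real.tanh (J * β)) := by

  constructor
  · intro hcons x
    obtain ⟨n, hxn⟩ := T.reach x
    have hxB : x ∈ treeBall T.root T.S n := sphere_subset_ball T hxn
    have hZ1 := partFn_pos T J β (fun u r => ((u : ℤ) : ℝ) * r) h (n + 1)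
    have hZ0 := partFn_pos T J β (fun u r => ((u : ℤ) : ℝ) * r) h n
    have hC := bigC_pos T J β h n
    have e5 : ∀ σ1 σ2 : treeBall T.root T.S n → ℤˣ,
        kernelEnergy T J β (fun u r => ((u : ℤ) : ℝ) * r) (hIter T J β h) n (extendBall T n σ1)
          - kernelEnergy T J β (fun u r => ((u : ℤ) : ℝ) * r) h n (extendBall T n σ1)
        = kernelEnergy T J β (fun u r => ((u : ℤ) : ℝ) * r) (hIter T J β h) n (extendBall T n σ2)
          - kernelEnergy T J β (fun u r => ((u : ℤ) : ℝ) * r) h n (extendBall T n σ2) := by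
      intro σ1 σ2
      have h1 := hcons n σ1
      have h2 := hcons n σ2
      rw [lhs_eq T J β h n σ1] at h1
      rw [lhs_eq T J β h n σ2] at h2
      simp only [kernel] at h1 h2
      rw [div_eq_div_iff hZ1.ne' hZ0.ne'] at h1 h2
      revert hC hZ0 hZ1 h1 h2
      generalize bigC T J β h n = C
      generalize partFn T J β (fun u r => ((u : ℤ) : ℝ) * r) h (n + 1) = Z1
      generalize partFn T J β (fun u r => ((u : ℤ) : ℝ) * r) h n = Z0
      generalize kernelEnergy T J β (fun u r => ((u : ℤ) : ℝ) * r) (hIter T J β h) n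
        (extendBall T n σ1) = F1
      generalize kernelEnergy T J β (fun u r => ((u : ℤ) : ℝ) * r) h n (extendBall T n σ1) = E1
      generalize kernelEnergy T J β (fun u r => ((u : ℤ) : ℝ) * r) (hIter T J β h) n
        (extendBall T n σ2) = F2
      generalize kernelEnergy T J β (fun u r => ((u : ℤ) : ℝ) * r) h n (extendBall T n σ2) = E2
      intro hC hZ0 hZ1 h1 h2
      have e4 : (C * Z0 * Z1) * (Real.exp F1 * Real.exp E2)
          = (C * Z0 * Z1) * (Real.exp F2 * Real.exp E1) := by
        linear_combination Real.exp E2 * Z1 * h1 - Real.exp E1 * Z1 * h2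
      have e5' := mul_left_cancel₀ (show (C * Z0 * Z1 : ℝ) ≠ 0 from by positivity) e4
      rw [← Real.exp_add, ← Real.exp_add, Real.exp_eq_exp] at e5'
      linarith
    have hdiffsum : ∀ σ' : treeBall T.root T.S n → ℤˣ,
        kernelEnergy T J β (fun u r => ((u : ℤ) : ℝ) * r) (hIter T J β h) n (extendBall T n σ')
          - kernelEnergy T J β (fun u r => ((u : ℤ) : ℝ) * r) h n (extendBall T n σ')
        = ∑ z ∈ treeSphere T.root T.S n,
            ((extendBall T n σ' z : ℤ) : ℝ) * (hIter T J β h z - h z) := by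
      intro σ'
      simp only [kernelEnergy]
      have hzz : (∑ z ∈ treeSphere T.root T.S n,
          ((extendBall T n σ' z : ℤ) : ℝ) * (hIter T J β h z - h z))
          = (∑ z ∈ treeSphere T.root T.S n, ((extendBall T n σ' z : ℤ) : ℝ) * hIter T J β h z)
            - ∑ z ∈ treeSphere T.root T.S n, ((extendBall T n σ' z : ℤ) : ℝ) * h z := by
        rw [← Finset.sum_sub_distrib]
        exact Finset.sum_congr rfl fun z _ => by ring
      rw [hzz]
      ring
    have hkey := e5 (fun _ => 1)
      (fun z => if z = (⟨x, hxB⟩ : treeBall T.root T.S n) then -1 else 1)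
    rw [hdiffsum, hdiffsum] at hkey
    have hsum1 : (∑ z ∈ treeSphere T.root T.S n,
        ((extendBall T n (fun _ => 1) z : ℤ) : ℝ) * (hIter T J β h z - h z))
        = ∑ z ∈ treeSphere T.root T.S n, (hIter T J β h z - h z) :=
      Finset.sum_congr rfl fun z hz => by
        have hzB : z ∈ treeBall T.root T.S n := sphere_subset_ball T hz
        simp [extendBall, hzB]
    have hsum2 : (∑ z ∈ treeSphere T.root T.S n,
        ((extendBall T n
            (fun z => if z = (⟨x, hxB⟩ : treeBall T.root T.S n) then -1 else 1) z : ℤ) : ℝ)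
          * (hIter T J β h z - h z))
        = (∑ z ∈ treeSphere T.root T.S n, (hIter T J β h z - h z))
          - 2 * (hIter T J β h x - h x) := by
      have hstep : ∀ z ∈ treeSphere T.root T.S n,
          ((extendBall T n
              (fun z => if z = (⟨x, hxB⟩ : treeBall T.root T.S n) then -1 else 1) z : ℤ) : ℝ)
            * (hIter T J β h z - h z)
          = (hIter T J β h z - h z) - (if z = x then 2 * (hIter T J β h z - h z) else 0) := by
        intro z hz
        have hzB : z ∈ treeBall T.root T.S n := sphere_subset_ball T hz
        simp only [extendBall, dif_pos hzB]
        by_cases hzx : z = x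
        · rw [if_pos (Subtype.ext hzx : (⟨z, hzB⟩ : treeBall T.root T.S n) = ⟨x, hxB⟩),
            if_pos hzx]
          simp only [Units.val_neg, Units.val_one, Int.cast_neg, Int.cast_one]
          ring
        · rw [if_neg (fun hh => hzx (congrArg Subtype.val hh)), if_neg hzx]
          simp only [Units.val_one, Int.cast_one]
          ring
      rw [Finset.sum_congr rfl hstep, Finset.sum_sub_distrib,
        Finset.sum_ite_eq' (treeSphere T.root T.S n) x
          (fun z => 2 * (hIter T J β h z - h z)), if_pos hxn]
    rw [hsum1, hsum2] at hkey
    have hfin : hIter T J β h x = h x := by linarith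
    calc h x = hIter T J β h x := hfin.symm
      _ = ∑ y ∈ T.S x, isingF (h y) (Real.tanh (J * β)) := rfl
  · intro hrec n σ
    have hEq : hIter T J β h = h := funext fun z => (hrec z).symm
    rw [lhs_eq T J β h n σ, hEq, partFn_succ T J β h n, hEq, kernel]
    exact mul_div_mul_left _ _ (bigC_pos T J β h n).ne'
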